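/- Let M be a monoid. Call an M-pigmented word a magnet if no step of ⤳_1, ⤳_2, or ⤳_3 applies to it (it is maximal for each of the three rewriting relations). Then every equivalence class of the relation ≡ on P(M)(n), defined by p ≡ p' iff first_1(p) = first_1(p') and first_1^R(p) = first_1^R(p'), contains exactly one magnet. -/

import Mathlib

/-- An `M`-pigmented word of arity `n`: a list of letters `(i, α)` whose value is
`i ∈ Fin n` (representing the value `i + 1 ∈ {1, …, n}`) and whose pigment is `α ∈ M`. -/
abbrev PW (M : Type*) (n : ℕ) : Type _ := List (Fin n × M)

/-- The value `i` occurs in the word `p`. -/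
def hasVal {M : Type*} {n : ℕ} (p : PW M n) (i : Fin n) : Prop := ∃ l ∈ p, l.1 = i

/-- `⤳₁`: delete a letter whose value occurs both before and after it
(a position which is neither a left `1`-witness nor a right `1`-witness). -/
def Step1 {M : Type*} {n : ℕ} (u v : PW M n) : Prop :=
  ∃ (p p' : PW M n) (i : Fin n) (α : M),
    u = p ++ (i, α) :: p' ∧ v = p ++ p' ∧ hasVal p i ∧ hasVal p' i

/-- `⤳₂`: swap two adjacent letters `i₁^{α₁} i₂^{α₂}` with distinct values, where
`i₁` occurs after, `i₂` occurs before, and `i₂` does not occur after. -/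
def Step2 {M : Type*} {n : ℕ} (u v : PW M n) : Prop :=
  ∃ (p p' : PW M n) (i₁ i₂ : Fin n) (α₁ α₂ : M),
    u = p ++ (i₁, α₁) :: (i₂, α₂) :: p' ∧ v = p ++ (i₂, α₂) :: (i₁, α₁) :: p' ∧
    i₁ ≠ i₂ ∧ hasVal p' i₁ ∧ hasVal p i₂ ∧ ¬ hasVal p' i₂

/-- `⤳₃`: contract two equal adjacent letters to one. -/
def Step3 {M : Type*} {n : ℕ} (u v : PW M n) : Prop :=
  ∃ (p p' : PW M n) (i : Fin n) (α : M),
    u = p ++ (i, α) :: (i, α) :: p' ∧ v = p ++ (i, α) :: p'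

/-- The union `⤳₁ ∪ ⤳₂ ∪ ⤳₃`; the relation `∼` is its reflexive, symmetric and
transitive closure `Relation.EqvGen MagnStep`. -/
def MagnStep {M : Type*} {n : ℕ} (u v : PW M n) : Prop := Step1 u v ∨ Step2 u v ∨ Step3 u v

/-- `firstKAux k pre p` keeps those letters of `p` whose position is a left
`k`-witness, given that the prefix `pre` has already been read. -/
def firstKAux {M : Type*} {n : ℕ} (k : ℕ) : PW M n → PW M n → PW M n
  | _, [] => []
  | pre, l :: t =>
    if pre.countP (fun x => decide (x.1 = l.1)) < k
    then l :: firstKAux k (pre ++ [l]) t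
    else firstKAux k (pre ++ [l]) t

/-- `firstK k p` keeps, for each value, the first `k` occurrences of that value in `p`
(the letters at left `k`-witness positions). -/
def firstK {M : Type*} {n : ℕ} (k : ℕ) (p : PW M n) : PW M n := firstKAux k [] p

/-- `firstKR k p` keeps, for each value, the last `k` occurrences of that value in `p`:
it is the reverse of `firstK k` applied to the reverse of `p`. -/
def firstKR {M : Type*} {n : ℕ} (k : ℕ) (p : PW M n) : PW M n := (firstK k p.reverse).reverse

/-- A magnet: an `M`-pigmented word to which no step of `⤳₁`, `⤳₂` or `⤳₃` applies. -/
def IsMagnet {M : Type*} {n : ℕ} (p : PW M n) : Prop := ∀ v : PW M n, ¬ MagnStep p v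

namespace Mag
variable {M : Type*} {n : ℕ}

def vals (p : PW M n) : List (Fin n) := p.map Prod.fst

@[simp] lemma vals_nil : vals ([] : PW M n) = [] := rfl
@[simp] lemma vals_cons (l : Fin n × M) (t : PW M n) : vals (l :: t) = l.1 :: vals t := rfl
@[simp] lemma vals_append (u v : PW M n) : vals (u ++ v) = vals u ++ vals v :=
  List.map_append

lemma vals_eq_nil {p : PW M n} (h : vals p = []) : p = [] := by
  cases p with
  | nil => rfl
  | cons l t => simp at h

lemma hasVal_iff {p : PW M n} {i : Fin n} : hasVal p i ↔ i ∈ vals p := by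
  simp [hasVal, vals, List.mem_map]

lemma mem_vals_split {p : PW M n} {u : Fin n} (h : u ∈ vals p) :
    ∃ (t₁ : PW M n) (z : Fin n × M) (t₂ : PW M n), p = t₁ ++ z :: t₂ ∧ z.1 = u := by
  rcases List.mem_map.mp h with ⟨z, hz, hzu⟩
  rcases List.append_of_mem hz with ⟨t₁, t₂, rfl⟩
  exact ⟨t₁, z, t₂, rfl, hzu⟩

/-- first occurrences of values not in the seen set `S`. -/
def fo : List (Fin n) → PW M n → PW M n
  | _, [] => []
  | S, l :: t => if l.1 ∈ S then fo S t else l :: fo (l.1 :: S) t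

@[simp] lemma fo_nil (S : List (Fin n)) : fo S ([] : PW M n) = [] := rfl

lemma fo_congr : ∀ (p : PW M n) (S S' : List (Fin n)),
    (∀ u ∈ vals p, (u ∈ S ↔ u ∈ S')) → fo S p = fo S' p
  | [], _, _, _ => rfl
  | l :: t, S, S', h => by
    have hl := h l.1 (by simp)
    by_cases hc : l.1 ∈ S
    · rw [fo, fo, if_pos hc, if_pos (hl.mp hc)]
      exact fo_congr t S S' (fun u hu => h u (by simp [hu]))
    · rw [fo, fo, if_neg hc, if_neg (fun c => hc (hl.mpr c))]
      congr 1
      refine fo_congr t _ _ (fun u hu => ?_)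
      simp only [List.mem_cons]
      rw [h u (by simp [hu])]

lemma fo_append (S : List (Fin n)) (xs ys : PW M n) :
    fo S (xs ++ ys) = fo S xs ++ fo (vals xs ++ S) ys := by
  induction xs generalizing S with
  | nil => simp
  | cons l t ih =>
    by_cases hc : l.1 ∈ S
    · rw [List.cons_append, fo, if_pos hc, fo, if_pos hc, ih]
      congr 1
      refine fo_congr _ _ _ (fun u _ => ?_)
      simp only [vals_cons, List.mem_append, List.mem_cons]
      constructor
      · rintro (h | h)
        exacts [Or.inl (Or.inr h), Or.inr h]
      · rintro ((he | h) | h)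
        exacts [Or.inr (he ▸ hc), Or.inl h, Or.inr h]
    · rw [List.cons_append, fo, if_neg hc, fo, if_neg hc, ih, List.cons_append]
      congr 2
      exact fo_congr _ _ _ (fun u _ => by simp [List.mem_append, List.mem_cons]; tauto)

lemma mem_vals_fo {S : List (Fin n)} {p : PW M n} {u : Fin n} :
    u ∈ vals (fo S p) ↔ u ∈ vals p ∧ u ∉ S := by
  induction p generalizing S with
  | nil => simp
  | cons l t ih =>
    by_cases hc : l.1 ∈ S
    · rw [fo, if_pos hc, ih]
      constructor
      · rintro ⟨h1, h2⟩; exact ⟨by simp [h1], h2⟩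
      · rintro ⟨h1, h2⟩
        rcases (by simpa using h1 : u = l.1 ∨ u ∈ vals t) with rfl | h1
        · exact absurd hc h2
        · exact ⟨h1, h2⟩
    · rw [fo, if_neg hc]
      simp only [vals_cons, List.mem_cons, ih]
      constructor
      · rintro (rfl | ⟨h1, h2⟩)
        · exact ⟨Or.inl rfl, hc⟩
        · exact ⟨Or.inr h1, fun c => h2 (by simp [c])⟩
      · rintro ⟨h1, h2⟩
        by_cases he : u = l.1
        · exact Or.inl he
        · rcases (by simpa using h1 : u = l.1 ∨ u ∈ vals t) with rfl | h1'
          · exact absurd rfl he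
          · exact Or.inr ⟨h1', by simp [he, h2]⟩

lemma nodup_vals_fo (S : List (Fin n)) (p : PW M n) : (vals (fo S p)).Nodup := by
  induction p generalizing S with
  | nil => simp
  | cons l t ih =>
    by_cases hc : l.1 ∈ S
    · rw [fo, if_pos hc]; exact ih S
    · rw [fo, if_neg hc]
      refine List.nodup_cons.mpr ⟨?_, ih _⟩
      intro c
      exact (mem_vals_fo.mp c).2 (by simp)

lemma fo_eq_self {S : List (Fin n)} {xs : PW M n} (hn : (vals xs).Nodup)
    (h : ∀ u ∈ vals xs, u ∉ S) : fo S xs = xs := by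
  induction xs generalizing S with
  | nil => rfl
  | cons l t ih =>
    rw [fo, if_neg (h l.1 (by simp))]
    congr 1
    refine ih (by simpa [vals] using hn.of_cons) (fun u hu => ?_)
    simp only [List.mem_cons, not_or]
    exact ⟨fun c => (List.nodup_cons.mp hn).1 (c ▸ hu), h u (by simp [hu])⟩

end Mag
namespace Mag
variable {M : Type*} {n : ℕ}

lemma firstKAux_one (p : PW M n) : ∀ pre, firstKAux 1 pre p = fo (vals pre) p := by
  induction p with
  | nil => intro pre; rfl
  | cons l t ih =>
    intro pre
    by_cases hc : l.1 ∈ vals pre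
    · have hcnt : ¬ pre.countP (fun x => decide (x.1 = l.1)) < 1 := by
        rcases List.mem_map.mp hc with ⟨z, hz, hzl⟩
        have : 0 < pre.countP (fun x => decide (x.1 = l.1)) :=
          List.countP_pos_iff.mpr ⟨z, hz, by simp [hzl]⟩
        omega
      rw [firstKAux, if_neg hcnt, ih, fo, if_pos hc]
      refine fo_congr _ _ _ (fun u _ => ?_)
      simp only [vals_append, List.mem_append, vals_cons, vals_nil, List.mem_cons]
      constructor
      · rintro (h | (he | h))
        exacts [h, he ▸ hc, absurd h List.not_mem_nil]
      · intro h; exact Or.inl h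
    · have hcnt : pre.countP (fun x => decide (x.1 = l.1)) < 1 := by
        have : pre.countP (fun x => decide (x.1 = l.1)) = 0 :=
          List.countP_eq_zero.mpr (fun z hz => by
            simp only [decide_eq_true_eq]
            exact fun c => hc (c ▸ List.mem_map.mpr ⟨z, hz, rfl⟩))
        omega
      rw [firstKAux, if_pos hcnt, ih, fo, if_neg hc]
      congr 1
      refine fo_congr _ _ _ (fun u _ => ?_)
      simp only [vals_append, List.mem_append, vals_cons, vals_nil, List.mem_cons]
      constructor
      · rintro (h | (he | h))
        exacts [Or.inr h, Or.inl he, absurd h List.not_mem_nil]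
      · rintro (he | h)
        exacts [Or.inr (Or.inl he), Or.inl h]

lemma firstK_one (p : PW M n) : firstK 1 p = fo [] p := firstKAux_one p []

/-- last occurrences -/
def lo : PW M n → PW M n
  | [] => []
  | l :: t => if l.1 ∈ vals t then lo t else l :: lo t

@[simp] lemma lo_nil : lo ([] : PW M n) = [] := rfl

lemma firstKR_one (p : PW M n) : firstKR 1 p = lo p := by
  unfold firstKR
  rw [firstK_one]
  induction p with
  | nil => rfl
  | cons l t ih =>
    rw [List.reverse_cons, fo_append, lo]
    by_cases hc : l.1 ∈ vals t
    · have hc' : l.1 ∈ vals t.reverse ++ ([] : List (Fin n)) := by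
        simpa [vals, List.mem_map] using (by
          rcases List.mem_map.mp hc with ⟨z, hz, hzl⟩
          exact List.mem_map.mpr ⟨z, List.mem_reverse.mpr hz, hzl⟩ :
          l.1 ∈ vals t.reverse)
      rw [if_pos hc, fo, if_pos hc', fo_nil, List.append_nil, ih]
    · have hc' : l.1 ∉ vals t.reverse ++ ([] : List (Fin n)) := by
        simp only [List.append_nil]
        intro c
        rcases List.mem_map.mp c with ⟨z, hz, hzl⟩
        exact hc (List.mem_map.mpr ⟨z, List.mem_reverse.mp hz, hzl⟩)
      rw [if_neg hc, fo, if_neg hc', fo_nil, List.reverse_append, ih]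
      rfl

lemma mem_vals_lo {p : PW M n} {u : Fin n} : u ∈ vals (lo p) ↔ u ∈ vals p := by
  induction p with
  | nil => simp
  | cons l t ih =>
    by_cases hc : l.1 ∈ vals t
    · rw [lo, if_pos hc, ih]
      simp only [vals_cons, List.mem_cons]
      constructor
      · exact Or.inr
      · rintro (rfl | h)
        exacts [hc, h]
    · rw [lo, if_neg hc]
      simp [ih]

lemma nodup_vals_lo (p : PW M n) : (vals (lo p)).Nodup := by
  induction p with
  | nil => simp
  | cons l t ih =>
    by_cases hc : l.1 ∈ vals t
    · rw [lo, if_pos hc]; exact ih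
    · rw [lo, if_neg hc]
      exact List.nodup_cons.mpr ⟨fun c => hc (mem_vals_lo.mp c), ih⟩

lemma lo_append_skip (xs ys : PW M n)
    (h : ∀ (t₁ : PW M n) z (t₂ : PW M n), xs = t₁ ++ z :: t₂ → z.1 ∈ vals t₂ ++ vals ys) :
    lo (xs ++ ys) = lo ys := by
  induction xs with
  | nil => simp
  | cons l t ih =>
    have hl : l.1 ∈ vals (t ++ ys) := by
      have := h [] l t rfl
      simpa using this
    rw [List.cons_append, lo, if_pos hl]
    exact ih (fun t₁ z t₂ e => h (l :: t₁) z t₂ (by rw [e]; rfl))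

lemma lo_cons_of_not_mem {l : Fin n × M} {t : PW M n} (h : l.1 ∉ vals t) :
    lo (l :: t) = l :: lo t := by rw [lo, if_neg h]

end Mag
namespace Mag
variable {M : Type*} {n : ℕ}

/-- split at the first "last occurrence" -/
def spl : PW M n → PW M n × PW M n
  | [] => ([], [])
  | l :: t => if l.1 ∈ vals t then (l :: (spl t).1, (spl t).2) else ([], l :: t)

lemma spl_eq : ∀ q : PW M n, q = (spl q).1 ++ (spl q).2
  | [] => rfl
  | l :: t => by
    by_cases hc : l.1 ∈ vals t
    · rw [spl, if_pos hc, List.cons_append]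
      exact congrArg (l :: ·) (spl_eq t)
    · rw [spl, if_neg hc]
      rfl

lemma spl_snd {q : PW M n} (h : q ≠ []) :
    ∃ c R, (spl q).2 = c :: R ∧ c.1 ∉ vals R := by
  induction q with
  | nil => exact absurd rfl h
  | cons l t ih =>
    by_cases hc : l.1 ∈ vals t
    · rw [spl, if_pos hc]
      have ht : t ≠ [] := by
        intro e; rw [e] at hc; simp at hc
      exact ih ht
    · rw [spl, if_neg hc]
      exact ⟨l, t, rfl, hc⟩

lemma spl_fst_later : ∀ (q t₁ : PW M n) (z : Fin n × M) (t₂ : PW M n),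
    (spl q).1 = t₁ ++ z :: t₂ → z.1 ∈ vals (t₂ ++ (spl q).2)
  | [], t₁, z, t₂, h => by simp [spl] at h
  | l :: t, t₁, z, t₂, h => by
    by_cases hc : l.1 ∈ vals t
    · have e1 : (spl (l :: t)).1 = l :: (spl t).1 := by rw [spl, if_pos hc]
      have e2 : (spl (l :: t)).2 = (spl t).2 := by rw [spl, if_pos hc]
      rw [e1] at h
      rw [e2]
      cases t₁ with
      | nil =>
        simp only [List.nil_append, List.cons.injEq] at h
        rcases h with ⟨rfl, rfl⟩
        have hh : l.1 ∈ vals ((spl t).1 ++ (spl t).2) := by rw [← spl_eq t]; exact hc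
        simpa using (by simpa using hh : l.1 ∈ vals (spl t).1 ∨ l.1 ∈ vals (spl t).2)
      | cons a t₁' =>
        simp only [List.cons_append, List.cons.injEq] at h
        exact spl_fst_later t t₁' z t₂ h.2
    · rw [show (spl (l :: t)).1 = [] from by rw [spl, if_neg hc]] at h
      simp at h

end Mag
namespace Mag
variable {M : Type*} {n : ℕ}

attribute [local instance] Classical.propDecidable

/-- reconstruction of the magnet from pending openers `ra` and last occurrences `b`. -/
noncomputable def G : PW M n → PW M n → PW M n
  | _, [] => []
  | ra, y :: b' =>
    if y.1 ∈ vals ra then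
      match ra.dropWhile (fun x => x.1 ≠ y.1) with
      | [] => []
      | x :: a₂ =>
        ra.takeWhile (fun x => x.1 ≠ y.1) ++ (if x = y then x :: G a₂ b' else x :: y :: G a₂ b')
    else y :: G ra b'

@[simp] lemma G_nil (ra : PW M n) : G ra [] = [] := by cases ra <;> rfl

lemma takeWhile_val (a₁ : PW M n) (x : Fin n × M) (a₂ : PW M n) (v : Fin n)
    (hx : x.1 = v) (h : v ∉ vals a₁) :
    (a₁ ++ x :: a₂).takeWhile (fun z => z.1 ≠ v) = a₁ ∧
    (a₁ ++ x :: a₂).dropWhile (fun z => z.1 ≠ v) = x :: a₂ := by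
  induction a₁ with
  | nil =>
    constructor
    · rw [List.nil_append, List.takeWhile_cons, if_neg (by simp [hx])]
    · rw [List.nil_append, List.dropWhile_cons, if_neg (by simp [hx])]
  | cons a t ih =>
    have hav : ¬ (a.1 = v) := fun c => h (by simp [c])
    have iht := ih (fun c => h (by simp [c]))
    constructor
    · rw [List.cons_append, List.takeWhile_cons, if_pos (by simp [hav])]
      rw [iht.1]
    · rw [List.cons_append, List.dropWhile_cons, if_pos (by simp [hav])]
      exact iht.2

lemma G_not {ra : PW M n} {y : Fin n × M} {b' : PW M n} (h : y.1 ∉ vals ra) :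
    G ra (y :: b') = y :: G ra b' := by
  rw [G, if_neg h]

lemma G_single {a₁ a₂ : PW M n} {y : Fin n × M} {b' : PW M n} (h : y.1 ∉ vals a₁) :
    G (a₁ ++ y :: a₂) (y :: b') = a₁ ++ y :: G a₂ b' := by
  have hmem : y.1 ∈ vals (a₁ ++ y :: a₂) := by simp
  have htw := takeWhile_val a₁ y a₂ y.1 rfl h
  rw [G, if_pos hmem, htw.2, htw.1]
  show a₁ ++ (if y = y then y :: G a₂ b' else y :: y :: G a₂ b') = a₁ ++ y :: G a₂ b'
  rw [if_pos rfl]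

lemma G_double {a₁ a₂ : PW M n} {x y : Fin n × M} {b' : PW M n}
    (h : y.1 ∉ vals a₁) (hx : x.1 = y.1) (hxy : x ≠ y) :
    G (a₁ ++ x :: a₂) (y :: b') = a₁ ++ x :: y :: G a₂ b' := by
  have hmem : y.1 ∈ vals (a₁ ++ x :: a₂) := by simp [← hx]
  have htw := takeWhile_val a₁ x a₂ y.1 hx h
  rw [G, if_pos hmem, htw.2, htw.1]
  show a₁ ++ (if x = y then x :: G a₂ b' else x :: y :: G a₂ b') = a₁ ++ x :: y :: G a₂ b'
  rw [if_neg hxy]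

/-- get the first occurrence decomposition from membership -/
lemma exists_first_decomp {ra : PW M n} {u : Fin n} (h : u ∈ vals ra) :
    ∃ (a₁ : PW M n) (x : Fin n × M) (a₂ : PW M n),
      ra = a₁ ++ x :: a₂ ∧ x.1 = u ∧ u ∉ vals a₁ := by
  induction ra with
  | nil => simp at h
  | cons l t ih =>
    by_cases he : l.1 = u
    · exact ⟨[], l, t, rfl, he, by simp⟩
    · have h' : u ∈ vals t := by
        rcases (by simpa using h : u = l.1 ∨ u ∈ vals t) with c | h'
        · exact absurd c.symm he
        · exact h'
      rcases ih h' with ⟨a₁, x, a₂, e, hx, hn⟩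
      refine ⟨l :: a₁, x, a₂, by rw [e]; rfl, hx, ?_⟩
      simp only [vals_cons, List.mem_cons, not_or]
      exact ⟨fun c => he c.symm, hn⟩

/-- where can an adjacent pair sit in an append -/
lemma adj_cases {u v p p' : PW M n} {c d : Fin n × M} (h : u ++ v = p ++ c :: d :: p') :
    (∃ s, u = p ++ c :: d :: s ∧ p' = s ++ v) ∨
    (u = p ++ [c] ∧ v = d :: p') ∨
    (∃ s, p = u ++ s ∧ v = s ++ c :: d :: p') := by
  induction u generalizing p with
  | nil => exact Or.inr (Or.inr ⟨p, rfl, by simpa using h⟩)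
  | cons a u' ih =>
    cases p with
    | nil =>
      simp only [List.nil_append] at h ⊢
      rw [List.cons_append] at h
      injection h with h1 h2
      subst h1
      cases u' with
      | nil =>
        simp only [List.nil_append] at h2
        exact Or.inr (Or.inl ⟨rfl, h2⟩)
      | cons e u'' =>
        rw [List.cons_append] at h2
        injection h2 with h3 h4
        subst h3
        exact Or.inl ⟨u'', rfl, h4.symm⟩
    | cons g p₀ =>
      rw [List.cons_append, List.cons_append] at h
      injection h with h1 h2
      subst h1
      rcases ih h2 with ⟨s, e1, e2⟩ | ⟨e1, e2⟩ | ⟨s, e1, e2⟩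
      · exact Or.inl ⟨s, by rw [List.cons_append, e1], e2⟩
      · exact Or.inr (Or.inl ⟨by rw [List.cons_append, e1], e2⟩)
      · exact Or.inr (Or.inr ⟨s, by rw [List.cons_append, e1], e2⟩)

lemma nodup_of_later {A : PW M n}
    (h : ∀ (t₁ : PW M n) z (t₂ : PW M n), A = t₁ ++ z :: t₂ → z.1 ∉ vals t₁) :
    (vals A).Nodup := by
  induction A with
  | nil => simp
  | cons a A' ih =>
    refine List.nodup_cons.mpr ⟨?_, ih (fun t₁ z t₂ e => ?_)⟩
    · intro hc
      rcases mem_vals_split hc with ⟨t₁, z, t₂, e, hz⟩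
      exact h (a :: t₁) z t₂ (by rw [e]; rfl) (by simp [hz])
    · have := h (a :: t₁) z t₂ (by rw [e]; rfl)
      intro c
      exact this (by simp [c])

end Mag
namespace Mag
variable {M : Type*} {n : ℕ}

lemma split_facts {a₁ a₂ : PW M n} {x y : Fin n × M} {b' : PW M n}
    (h1 : (vals (a₁ ++ x :: a₂)).Nodup) (h2 : (vals (y :: b')).Nodup)
    (h3 : ∀ u ∈ vals (a₁ ++ x :: a₂), u ∈ vals (y :: b')) (hx : x.1 = y.1) :
    (vals a₂).Nodup ∧ (∀ u ∈ vals a₂, u ∈ vals b') ∧ y.1 ∉ vals a₂ ∧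
      (∀ u ∈ vals a₁, u ∈ vals b') ∧ y.1 ∉ vals b' ∧ (vals a₁).Nodup ∧ y.1 ∉ vals a₁ ∧
      (∀ v ∈ vals a₁, v ∉ vals a₂) := by
  rw [vals_append, vals_cons] at h1 h3
  have hmid := List.nodup_middle.mp h1
  rcases List.nodup_cons.mp hmid with ⟨hxn, hun⟩
  have hxa1 : x.1 ∉ vals a₁ := fun c => hxn (List.mem_append.mpr (Or.inl c))
  have hxa2 : x.1 ∉ vals a₂ := fun c => hxn (List.mem_append.mpr (Or.inr c))
  have hyb' : y.1 ∉ vals b' := by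
    have := List.nodup_cons.mp (by simpa using h2)
    exact this.1
  have ha2b : ∀ u ∈ vals a₂, u ∈ vals b' := by
    intro u hu
    have := h3 u (List.mem_append.mpr (Or.inr (by simp [hu])))
    rcases (by simpa using this) with rfl | h
    · exact absurd hu (hx ▸ hxa2)
    · exact h
  have ha1b : ∀ u ∈ vals a₁, u ∈ vals b' := by
    intro u hu
    have := h3 u (List.mem_append.mpr (Or.inl hu))
    rcases (by simpa using this) with rfl | h
    · exact absurd hu (hx ▸ hxa1)
    · exact h
  refine ⟨(List.nodup_append.mp hun).2.1, ha2b, hx ▸ hxa2, ha1b, hyb',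
    (List.nodup_append.mp hun).1, hx ▸ hxa1, ?_⟩
  intro v hv c
  exact (List.nodup_append'.mp hun).2.2 hv c

lemma mem_vals_G {b : PW M n} : ∀ {ra : PW M n},
    (vals ra).Nodup → (vals b).Nodup → (∀ u ∈ vals ra, u ∈ vals b) →
    ∀ {u}, (u ∈ vals (G ra b) ↔ u ∈ vals b) := by
  induction b with
  | nil =>
    intro ra _ _ h3 u
    have : ra = [] := vals_eq_nil (List.eq_nil_iff_forall_not_mem.mpr
      (fun x hx => by simpa using h3 x hx))
    subst this
    simp
  | cons y b' ih =>
    intro ra h1 h2 h3 u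
    by_cases hc : y.1 ∈ vals ra
    · obtain ⟨a₁, x, a₂, rfl, hx, hna⟩ := exists_first_decomp hc
      obtain ⟨f1, f2, f3, f4, f5, f6, f7, f8⟩ := split_facts h1 h2 h3 hx
      have ihe := fun {u} => @ih a₂ f1 (by simpa [vals] using h2.of_cons) f2 u
      by_cases hxy : x = y
      · subst hxy
        rw [G_single hna]
        simp only [vals_append, vals_cons, List.mem_append, List.mem_cons, ihe]
        constructor
        · rintro (h | h | h)
          exacts [Or.inr (f4 u h), Or.inl (h.trans hx), Or.inr h]
        · rintro (h | h)
          exacts [Or.inr (Or.inl (h.trans hx.symm)), Or.inr (Or.inr h)]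
      · rw [G_double hna hx hxy]
        simp only [vals_append, vals_cons, List.mem_append, List.mem_cons, ihe]
        constructor
        · rintro (h | h | h | h)
          exacts [Or.inr (f4 u h), Or.inl (h.trans hx), Or.inl h, Or.inr h]
        · rintro (h | h)
          exacts [Or.inr (Or.inr (Or.inl h)), Or.inr (Or.inr (Or.inr h))]
    · rw [G_not hc]
      have h3' : ∀ u ∈ vals ra, u ∈ vals b' := by
        intro u hu
        rcases (by simpa using h3 u hu) with rfl | h
        exacts [absurd hu hc, h]
      simp only [vals_cons, List.mem_cons, ih h1 (by simpa [vals] using h2.of_cons) h3']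

lemma count_vals_G_le_one {b : PW M n} : ∀ {ra : PW M n},
    (vals ra).Nodup → (vals b).Nodup → (∀ u ∈ vals ra, u ∈ vals b) →
    ∀ u, u ∉ vals ra → (vals (G ra b)).count u ≤ 1 := by
  induction b with
  | nil => intro ra _ _ _ u _; simp
  | cons y b' ih =>
    intro ra h1 h2 h3 u hu
    have h2' : (vals b').Nodup := by simpa [vals] using h2.of_cons
    by_cases hc : y.1 ∈ vals ra
    · obtain ⟨a₁, x, a₂, rfl, hx, hna⟩ := exists_first_decomp hc
      obtain ⟨f1, f2, f3, f4, f5, f6, f7, f8⟩ := split_facts h1 h2 h3 hx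
      have hua1 : (vals a₁).count u = 0 :=
        List.count_eq_zero.mpr (fun c => hu (by simp [c]))
      have hua2 : u ∉ vals a₂ := fun c => hu (by simp [c])
      have hxu : ¬ (x.1 = u) := fun c => hu (by simp [← c])
      have hyu : ¬ (y.1 = u) := fun c => hxu (hx ▸ c)
      have hrec := ih f1 h2' f2 u hua2
      by_cases hxy : x = y
      · subst hxy
        rw [G_single hna, vals_append, List.count_append, vals_cons, List.count_cons]
        simp only [hua1, beq_iff_eq, if_neg hxu]
        omega
      · rw [G_double hna hx hxy, vals_append, List.count_append, vals_cons,
          List.count_cons, vals_cons, List.count_cons]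
        simp only [hua1, beq_iff_eq, if_neg hxu, if_neg hyu]
        omega
    · rw [G_not hc]
      have h3' : ∀ v ∈ vals ra, v ∈ vals b' := by
        intro v hv
        rcases (by simpa using h3 v hv) with rfl | h
        exacts [absurd hv hc, h]
      rw [vals_cons, List.count_cons]
      by_cases huy : y.1 = u
      · have : u ∉ vals (G ra b') := by
          rw [mem_vals_G h1 h2' h3']
          exact huy ▸ (List.nodup_cons.mp (by simpa using h2)).1
        simp [List.count_eq_zero.mpr this, huy]
      · simp only [beq_iff_eq, if_neg huy]
        have := ih h1 h2' h3' u hu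
        omega

lemma count_vals_G_le_two {b : PW M n} : ∀ {ra : PW M n},
    (vals ra).Nodup → (vals b).Nodup → (∀ u ∈ vals ra, u ∈ vals b) →
    ∀ u, (vals (G ra b)).count u ≤ 2 := by
  induction b with
  | nil => intro ra _ _ _ u; simp
  | cons y b' ih =>
    intro ra h1 h2 h3 u
    have h2' : (vals b').Nodup := by simpa [vals] using h2.of_cons
    by_cases hc : y.1 ∈ vals ra
    · obtain ⟨a₁, x, a₂, rfl, hx, hna⟩ := exists_first_decomp hc
      obtain ⟨f1, f2, f3, f4, f5, f6, f7, f8⟩ := split_facts h1 h2 h3 hx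
      have hyG : y.1 ∉ vals (G a₂ b') := fun c => f5 ((mem_vals_G f1 h2' f2).mp c)
      have hkey : (vals a₁).count u + (vals (G a₂ b')).count u ≤ 2 := by
        by_cases hua2 : u ∈ vals a₂
        · have h0 : (vals a₁).count u = 0 :=
            List.count_eq_zero.mpr (fun c => f8 u c hua2)
          rw [h0]
          simpa using ih f1 h2' f2 u
        · have := count_vals_G_le_one f1 h2' f2 u hua2
          have := List.nodup_iff_count_le_one.mp f6 u
          omega
      by_cases huy : u = y.1
      · subst huy
        have hG0 : (vals (G a₂ b')).count y.1 = 0 := List.count_eq_zero.mpr hyG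
        have ha0 : (vals a₁).count y.1 = 0 := List.count_eq_zero.mpr f7
        by_cases hxy : x = y
        · subst hxy
          rw [G_single hna, vals_append, List.count_append, vals_cons, List.count_cons]
          simp [hG0, ha0]
        · rw [G_double hna hx hxy, vals_append, List.count_append, vals_cons,
            List.count_cons, vals_cons, List.count_cons]
          simp [hG0, ha0, hx]
      · have hxu : ¬ (x.1 = u) := fun c => huy (by rw [← c, hx])
        have hyu : ¬ (y.1 = u) := fun c => huy c.symm
        by_cases hxy : x = y
        · subst hxy
          rw [G_single hna, vals_append, List.count_append, vals_cons, List.count_cons]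
          simp only [beq_iff_eq, if_neg hxu]
          omega
        · rw [G_double hna hx hxy, vals_append, List.count_append, vals_cons,
            List.count_cons, vals_cons, List.count_cons]
          simp only [beq_iff_eq, if_neg hxu, if_neg hyu]
          omega
    · rw [G_not hc]
      have h3' : ∀ v ∈ vals ra, v ∈ vals b' := by
        intro v hv
        rcases (by simpa using h3 v hv) with rfl | h
        exacts [absurd hv hc, h]
      rw [vals_cons, List.count_cons]
      have h1' := ih h1 h2' h3' u
      have : (if y.1 = u then 1 else 0) ≤ 1 := by split <;> omega
      by_cases huy : y.1 = u
      · have : u ∉ vals (G ra b') := by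
          rw [mem_vals_G h1 h2' h3']
          exact huy ▸ (List.nodup_cons.mp (by simpa using h2)).1
        simp [List.count_eq_zero.mpr this, huy]
      · simp only [beq_iff_eq, if_neg huy]
        omega

end Mag
namespace Mag
variable {M : Type*} {n : ℕ}

lemma lo_append_skip' {xs ys : PW M n} (h : ∀ z ∈ xs, (z : Fin n × M).1 ∈ vals ys) :
    lo (xs ++ ys) = lo ys :=
  lo_append_skip xs ys (fun t₁ z t₂ e =>
    List.mem_append.mpr (Or.inr (h z (e ▸ List.mem_append.mpr (Or.inr (by simp))))))

lemma fo_G {b : PW M n} : ∀ {ra : PW M n} {S : List (Fin n)},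
    (vals ra).Nodup → (vals b).Nodup → (∀ u ∈ vals ra, u ∈ vals b) →
    (∀ u ∈ S, u ∉ vals ra) → (∀ u ∈ vals b, u ∈ S ∨ u ∈ vals ra) →
    fo S (G ra b) = ra := by
  induction b with
  | nil =>
    intro ra S _ _ h3 _ _
    have : ra = [] := vals_eq_nil (List.eq_nil_iff_forall_not_mem.mpr
      (fun x hx => by simpa using h3 x hx))
    subst this
    rfl
  | cons y b' ih =>
    intro ra S h1 h2 h3 hS hb
    have h2' : (vals b').Nodup := by simpa [vals] using h2.of_cons
    by_cases hc : y.1 ∈ vals ra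
    · obtain ⟨a₁, x, a₂, rfl, hx, hna⟩ := exists_first_decomp hc
      obtain ⟨f1, f2, f3, f4, f5, f6, f7, f8⟩ := split_facts h1 h2 h3 hx
      have hfr : ∀ u ∈ vals (a₁ ++ [x]), u ∉ S := by
        intro u hu
        rcases (by simpa using hu : u ∈ vals a₁ ∨ u = x.1) with h | h
        · exact fun c => hS u c (by simp [h])
        · exact fun c => hS u c (by simp [h])
      have hnod : (vals (a₁ ++ [x])).Nodup := by
        rw [vals_append, vals_cons, vals_nil]
        have hh : (x.1 :: (vals a₁ ++ [])).Nodup := by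
          rw [List.append_nil]
          exact List.nodup_cons.mpr ⟨hx ▸ f7, f6⟩
        exact List.nodup_middle.mpr hh
      have hfo1 : fo S (a₁ ++ [x]) = a₁ ++ [x] := fo_eq_self hnod hfr
      have hS' : ∀ u ∈ (vals (a₁ ++ [x]) ++ S), u ∉ vals a₂ := by
        intro u hu
        rcases List.mem_append.mp hu with h | h
        · rcases (by simpa using h : u ∈ vals a₁ ∨ u = x.1) with h | h
          · exact f8 u h
          · exact h ▸ (hx ▸ f3)
        · exact fun c => hS u h (by simp [c])
      have hb' : ∀ u ∈ vals b', u ∈ (vals (a₁ ++ [x]) ++ S) ∨ u ∈ vals a₂ := by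
        intro u hu
        rcases hb u (by simp [hu]) with h | h
        · exact Or.inl (List.mem_append.mpr (Or.inr h))
        · rcases (by simpa using h : u ∈ vals a₁ ∨ u = x.1 ∨ u ∈ vals a₂) with h | h | h
          · exact Or.inl (List.mem_append.mpr (Or.inl (by simp [h])))
          · exact Or.inl (List.mem_append.mpr (Or.inl (by simp [h])))
          · exact Or.inr h
      have ihe := ih f1 h2' f2 hS' hb'
      by_cases hxy : x = y
      · subst hxy
        rw [G_single hna]
        have : a₁ ++ x :: G a₂ b' = (a₁ ++ [x]) ++ G a₂ b' := by simp
        rw [this, fo_append, hfo1, ihe]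
        simp
      · rw [G_double hna hx hxy]
        have : a₁ ++ x :: y :: G a₂ b' = (a₁ ++ [x]) ++ (y :: G a₂ b') := by simp
        rw [this, fo_append, hfo1, fo,
          if_pos (List.mem_append.mpr (Or.inl (by simp [← hx]))), ihe]
        simp
    · have hyS : y.1 ∈ S := by
        rcases hb y.1 (by simp) with h | h
        exacts [h, absurd h hc]
      have h3' : ∀ u ∈ vals ra, u ∈ vals b' := by
        intro u hu
        rcases (by simpa using h3 u hu) with rfl | h
        exacts [absurd hu hc, h]
      have hb' : ∀ u ∈ vals b', u ∈ S ∨ u ∈ vals ra := fun u hu => hb u (by simp [hu])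
      rw [G_not hc, fo, if_pos hyS]
      exact ih h1 h2' h3' hS hb'

lemma lo_G {b : PW M n} : ∀ {ra : PW M n},
    (vals ra).Nodup → (vals b).Nodup → (∀ u ∈ vals ra, u ∈ vals b) →
    lo (G ra b) = b := by
  induction b with
  | nil => intro ra _ _ _; simp
  | cons y b' ih =>
    intro ra h1 h2 h3
    have h2' : (vals b').Nodup := by simpa [vals] using h2.of_cons
    by_cases hc : y.1 ∈ vals ra
    · obtain ⟨a₁, x, a₂, rfl, hx, hna⟩ := exists_first_decomp hc
      obtain ⟨f1, f2, f3, f4, f5, f6, f7, f8⟩ := split_facts h1 h2 h3 hx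
      have hmem := fun {u} => @mem_vals_G M n b' a₂ f1 h2' f2 u
      have hyG : y.1 ∉ vals (G a₂ b') := fun c => f5 (hmem.mp c)
      have ihe := ih f1 h2' f2
      by_cases hxy : x = y
      · subst hxy
        rw [G_single hna]
        have hskip : lo (a₁ ++ (x :: G a₂ b')) = lo (x :: G a₂ b') := by
          refine lo_append_skip' (fun z hz => ?_)
          have : z.1 ∈ vals a₁ := List.mem_map.mpr ⟨z, hz, rfl⟩
          exact List.mem_cons.mpr (Or.inr (hmem.mpr (f4 z.1 this)))
        rw [hskip, lo_cons_of_not_mem hyG, ihe]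
      · rw [G_double hna hx hxy]
        have e : a₁ ++ x :: y :: G a₂ b' = (a₁ ++ [x]) ++ (y :: G a₂ b') := by simp
        rw [e]
        have hskip : lo ((a₁ ++ [x]) ++ (y :: G a₂ b')) = lo (y :: G a₂ b') := by
          refine lo_append_skip' (fun z hz => ?_)
          rcases List.mem_append.mp hz with h | h
          · have : z.1 ∈ vals a₁ := List.mem_map.mpr ⟨z, h, rfl⟩
            exact List.mem_cons.mpr (Or.inr (hmem.mpr (f4 z.1 this)))
          · have : z = x := by simpa using h
            exact List.mem_cons.mpr (Or.inl (this ▸ hx))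
        rw [hskip, lo_cons_of_not_mem hyG, ihe]
    · have h3' : ∀ u ∈ vals ra, u ∈ vals b' := by
        intro u hu
        rcases (by simpa using h3 u hu) with rfl | h
        exacts [absurd hu hc, h]
      rw [G_not hc]
      have hyG : y.1 ∉ vals (G ra b') := by
        rw [mem_vals_G h1 h2' h3']
        exact (List.nodup_cons.mp (by simpa using h2)).1
      rw [lo_cons_of_not_mem hyG, ih h1 h2' h3']

end Mag
namespace Mag
variable {M : Type*} {n : ℕ}

lemma append_singleton_inj {l₁ l₂ : PW M n} {a b : Fin n × M}
    (h : l₁ ++ [a] = l₂ ++ [b]) : l₁ = l₂ ∧ a = b := by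
  rcases List.append_inj' h rfl with ⟨e1, e2⟩
  exact ⟨e1, by injection e2⟩

lemma nodup_pair_facts {u p s : PW M n} {l₁ l₂ : Fin n × M}
    (hn : (vals u).Nodup) (e : u = p ++ l₁ :: l₂ :: s) :
    l₂.1 ∉ vals p ∧ l₂.1 ≠ l₁.1 := by
  subst e
  rw [vals_append, vals_cons, vals_cons] at hn
  have h1 := List.nodup_middle.mp hn
  rcases List.nodup_cons.mp h1 with ⟨hh, ht⟩
  have h2 := List.nodup_middle.mp ht
  rcases List.nodup_cons.mp h2 with ⟨hh2, _⟩
  refine ⟨fun c => hh2 (List.mem_append.mpr (Or.inl c)), fun c => hh ?_⟩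
  rw [← c]
  exact List.mem_append.mpr (Or.inr (by simp))

lemma cons_eq_append {T : PW M n} : ∀ (a₁ : PW M n) (x : Fin n × M),
    a₁ ++ x :: T = (a₁ ++ [x]) ++ T := by simp

/-- In `G ra b`, a letter immediately preceding a fresh closer has no later occurrence. -/
lemma prec_closer {b : PW M n} : ∀ {ra p p' : PW M n} {c d : Fin n × M},
    (vals ra).Nodup → (vals b).Nodup → (∀ u ∈ vals ra, u ∈ vals b) →
    G ra b = p ++ c :: d :: p' → d.1 ∉ vals ra → d.1 ∉ vals p →
    c.1 ∉ vals p' := by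
  induction b with
  | nil => intro ra p p' c d _ _ h3 e _ _; simp at e
  | cons y b' ih =>
    intro ra p p' c d h1 h2 h3 e hd hdp
    have h2' : (vals b').Nodup := by simpa [vals] using h2.of_cons
    by_cases hc : y.1 ∈ vals ra
    · obtain ⟨a₁, x, a₂, rfl, hx, hna⟩ := exists_first_decomp hc
      obtain ⟨f1, f2, f3, f4, f5, f6, f7, f8⟩ := split_facts h1 h2 h3 hx
      have hmemT : ∀ {u}, u ∈ vals (G a₂ b') ↔ u ∈ vals b' :=
        fun {u} => mem_vals_G f1 h2' f2
      have hyT : y.1 ∉ vals (G a₂ b') := fun cc => f5 (hmemT.mp cc)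
      have hun : (vals (a₁ ++ [x])).Nodup := by
        rw [vals_append, vals_cons, vals_nil]
        have hh : (x.1 :: (vals a₁ ++ [])).Nodup := by
          rw [List.append_nil]
          exact List.nodup_cons.mpr ⟨hx ▸ f7, f6⟩
        exact List.nodup_middle.mpr hh
      have hsub : ∀ z ∈ (a₁ ++ [x]), (z : Fin n × M).1 ∈ vals (a₁ ++ x :: a₂) := by
        intro z hz
        rcases List.mem_append.mp hz with h | h
        · have hm : z.1 ∈ vals a₁ := List.mem_map.mpr ⟨z, h, rfl⟩
          rw [vals_append]
          exact List.mem_append.mpr (Or.inl hm)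
        · have : z = x := by simpa using h
          subst this
          simp
      by_cases hxy : x = y
      · subst hxy
        rw [G_single hna, cons_eq_append] at e
        rcases adj_cases e with ⟨s, e1, e2⟩ | ⟨e1, e2⟩ | ⟨s, e1, e2⟩
        · have hdin : d ∈ a₁ ++ [x] := by rw [e1]; simp
          exact absurd (hsub d hdin) hd
        · rcases append_singleton_inj e1 with ⟨rfl, hcy⟩
          intro hcon
          refine hyT ?_
          rw [e2, vals_cons]
          exact List.mem_cons.mpr (Or.inr (hcy ▸ hcon))
        · refine ih f1 h2' f2 e2 (fun cc => hd (by simp [cc])) ?_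
          intro cc
          refine hdp ?_
          rw [e1, vals_append]
          exact List.mem_append.mpr (Or.inr cc)
      · rw [G_double hna hx hxy, cons_eq_append] at e
        -- (a₁ ++ [x]) ++ (y :: G a₂ b') = p ++ c :: d :: p'
        rcases adj_cases e with ⟨s, e1, e2⟩ | ⟨e1, e2⟩ | ⟨s, e1, e2⟩
        · have hdin : d ∈ a₁ ++ [x] := by rw [e1]; simp
          exact absurd (hsub d hdin) hd
        · -- d = y
          obtain ⟨hdy, _⟩ : y = d ∧ G a₂ b' = p' := by simpa using e2
          intro _
          exact hd (by rw [← hdy]; exact hc)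
        · cases s with
          | nil =>
            obtain ⟨hcy, e3⟩ : y = c ∧ G a₂ b' = d :: p' := by simpa using e2
            intro hcon
            refine hyT ?_
            rw [e3, vals_cons]
            exact List.mem_cons.mpr (Or.inr (by rw [hcy]; exact hcon))
          | cons g s' =>
            obtain ⟨-, e3⟩ : y = g ∧ G a₂ b' = s' ++ c :: d :: p' := by simpa using e2
            refine ih f1 h2' f2 e3 (fun cc => hd (by simp [cc])) ?_
            intro cc
            refine hdp ?_
            rw [e1, vals_append]
            exact List.mem_append.mpr (Or.inr (by simp [cc]))
    · have h3' : ∀ u ∈ vals ra, u ∈ vals b' := by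
        intro u hu
        rcases (by simpa using h3 u hu) with rfl | h
        exacts [absurd hu hc, h]
      have hyT : y.1 ∉ vals (G ra b') := by
        rw [mem_vals_G h1 h2' h3']
        exact (List.nodup_cons.mp (by simpa using h2)).1
      rw [G_not hc] at e
      cases p with
      | nil =>
        obtain ⟨hcy, e3⟩ : y = c ∧ G ra b' = d :: p' := by simpa using e
        intro hcon
        refine hyT ?_
        rw [e3, vals_cons]
        exact List.mem_cons.mpr (Or.inr (by rw [hcy]; exact hcon))
      | cons g p₀ =>
        obtain ⟨-, e3⟩ : y = g ∧ G ra b' = p₀ ++ c :: d :: p' := by simpa using e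
        exact ih h1 h2' h3' e3 hd (fun cc => hdp (by simp [cc]))

end Mag
namespace Mag
variable {M : Type*} {n : ℕ}

lemma noStep3 {b : PW M n} : ∀ {ra p p' : PW M n} {z : Fin n × M},
    (vals ra).Nodup → (vals b).Nodup → (∀ u ∈ vals ra, u ∈ vals b) →
    G ra b = p ++ z :: z :: p' → False := by
  induction b with
  | nil => intro ra p p' z _ _ _ e; simp at e
  | cons y b' ih =>
    intro ra p p' z h1 h2 h3 e
    have h2' : (vals b').Nodup := by simpa [vals] using h2.of_cons
    by_cases hc : y.1 ∈ vals ra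
    · obtain ⟨a₁, x, a₂, rfl, hx, hna⟩ := exists_first_decomp hc
      obtain ⟨f1, f2, f3, f4, f5, f6, f7, f8⟩ := split_facts h1 h2 h3 hx
      have hmemT : ∀ {u}, u ∈ vals (G a₂ b') ↔ u ∈ vals b' :=
        fun {u} => mem_vals_G f1 h2' f2
      have hyT : y.1 ∉ vals (G a₂ b') := fun cc => f5 (hmemT.mp cc)
      have hun : (vals (a₁ ++ [x])).Nodup := by
        rw [vals_append, vals_cons, vals_nil]
        have hh : (x.1 :: (vals a₁ ++ [])).Nodup := by
          rw [List.append_nil]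
          exact List.nodup_cons.mpr ⟨hx ▸ f7, f6⟩
        exact List.nodup_middle.mpr hh
      by_cases hxy : x = y
      · subst hxy
        rw [G_single hna, cons_eq_append] at e
        rcases adj_cases e with ⟨s, e1, e2⟩ | ⟨e1, e2⟩ | ⟨s, e1, e2⟩
        · exact (nodup_pair_facts hun e1).2 rfl
        · rcases append_singleton_inj e1 with ⟨rfl, hzy⟩
          refine hyT ?_
          rw [e2, ← hzy]
          simp
        · exact ih f1 h2' f2 e2
      · rw [G_double hna hx hxy, cons_eq_append] at e
        rcases adj_cases e with ⟨s, e1, e2⟩ | ⟨e1, e2⟩ | ⟨s, e1, e2⟩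
        · exact (nodup_pair_facts hun e1).2 rfl
        · rcases append_singleton_inj e1 with ⟨rfl, hxz⟩
          obtain ⟨hzy, -⟩ : y = z ∧ G a₂ b' = p' := by simpa using e2
          exact hxy (by rw [hxz, ← hzy])
        · cases s with
          | nil =>
            obtain ⟨hzy, e3⟩ : y = z ∧ G a₂ b' = z :: p' := by simpa using e2
            refine hyT ?_
            rw [e3, hzy]
            simp
          | cons g s' =>
            obtain ⟨-, e3⟩ : y = g ∧ G a₂ b' = s' ++ z :: z :: p' := by simpa using e2
            exact ih f1 h2' f2 e3
    · have h3' : ∀ u ∈ vals ra, u ∈ vals b' := by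
        intro u hu
        rcases (by simpa using h3 u hu) with rfl | h
        exacts [absurd hu hc, h]
      have hyT : y.1 ∉ vals (G ra b') := by
        rw [mem_vals_G h1 h2' h3']
        exact (List.nodup_cons.mp (by simpa using h2)).1
      rw [G_not hc] at e
      cases p with
      | nil =>
        obtain ⟨hzy, e3⟩ : y = z ∧ G ra b' = z :: p' := by simpa using e
        refine hyT ?_
        rw [e3, hzy]
        simp
      | cons g p₀ =>
        obtain ⟨-, e3⟩ : y = g ∧ G ra b' = p₀ ++ z :: z :: p' := by simpa using e
        exact ih h1 h2' h3' e3

lemma noStep2 {b : PW M n} : ∀ {ra p p' : PW M n} {l₁ l₂ : Fin n × M},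
    (vals ra).Nodup → (vals b).Nodup → (∀ u ∈ vals ra, u ∈ vals b) →
    G ra b = p ++ l₁ :: l₂ :: p' → l₁.1 ≠ l₂.1 → l₁.1 ∈ vals p' → l₂.1 ∈ vals p →
    l₂.1 ∉ vals p' → False := by
  induction b with
  | nil => intro ra p p' l₁ l₂ _ _ _ e _ _ _ _; simp at e
  | cons y b' ih =>
    intro ra p p' l₁ l₂ h1 h2 h3 e hne hl1 hl2 hl2n
    have h2' : (vals b').Nodup := by simpa [vals] using h2.of_cons
    by_cases hc : y.1 ∈ vals ra
    · obtain ⟨a₁, x, a₂, rfl, hx, hna⟩ := exists_first_decomp hc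
      obtain ⟨f1, f2, f3, f4, f5, f6, f7, f8⟩ := split_facts h1 h2 h3 hx
      have hmemT : ∀ {u}, u ∈ vals (G a₂ b') ↔ u ∈ vals b' :=
        fun {u} => mem_vals_G f1 h2' f2
      have hyT : y.1 ∉ vals (G a₂ b') := fun cc => f5 (hmemT.mp cc)
      have hun : (vals (a₁ ++ [x])).Nodup := by
        rw [vals_append, vals_cons, vals_nil]
        have hh : (x.1 :: (vals a₁ ++ [])).Nodup := by
          rw [List.append_nil]
          exact List.nodup_cons.mpr ⟨hx ▸ f7, f6⟩
        exact List.nodup_middle.mpr hh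
      -- helper for the "pair inside T" situation
      have inT : ∀ (s : PW M n), G a₂ b' = s ++ l₁ :: l₂ :: p' →
          l₂.1 ∈ vals (a₁ ++ [x]) ++ vals s → False := by
        intro s e3 hmem
        rcases List.mem_append.mp hmem with h | h
        · -- l₂ value among the openers flushed in this block
          rcases (by simpa using h : l₂.1 ∈ vals a₁ ∨ l₂.1 = x.1) with h | h
          · -- fresh closer: use prec_closer
            have hl2a₂ : l₂.1 ∉ vals a₂ := f8 _ h
            have hl2s : l₂.1 ∉ vals s := by
              intro cc
              -- l₂.1 would occur twice in G a₂ b', contradicting count ≤ 1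
              have hcount := count_vals_G_le_one f1 h2' f2 l₂.1 hl2a₂
              rw [e3, vals_append, List.count_append, vals_cons, vals_cons,
                List.count_cons, List.count_cons] at hcount
              have c1 : 1 ≤ (vals s).count l₂.1 := List.one_le_count_iff.mpr cc
              simp only [beq_iff_eq, if_true, if_neg hne] at hcount
              omega
            exact (prec_closer f1 h2' f2 e3 hl2a₂ hl2s) hl1
          · -- l₂ has value y.1, impossible inside T
            have : l₂.1 ∈ vals (G a₂ b') := by
              rw [e3, vals_append]
              exact List.mem_append.mpr (Or.inr (by simp))
            exact hyT (by rw [← hx, ← h]; exact this)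
        · exact ih f1 h2' f2 e3 hne hl1 h hl2n
      by_cases hxy : x = y
      · subst hxy
        rw [G_single hna, cons_eq_append] at e
        rcases adj_cases e with ⟨s, e1, e2⟩ | ⟨e1, e2⟩ | ⟨s, e1, e2⟩
        · exact (nodup_pair_facts hun e1).1 hl2
        · rcases append_singleton_inj e1 with ⟨rfl, hyl⟩
          refine hyT ?_
          rw [e2, vals_cons]
          exact List.mem_cons.mpr (Or.inr (by rw [hyl]; exact hl1))
        · exact inT s e2 (by rw [← vals_append, ← e1]; exact hl2)
      · rw [G_double hna hx hxy, cons_eq_append] at e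
        rcases adj_cases e with ⟨s, e1, e2⟩ | ⟨e1, e2⟩ | ⟨s, e1, e2⟩
        · exact (nodup_pair_facts hun e1).1 hl2
        · rcases append_singleton_inj e1 with ⟨rfl, hxl⟩
          obtain ⟨hzy, -⟩ : y = l₂ ∧ G a₂ b' = p' := by simpa using e2
          exact hne (by rw [← hxl, hx, hzy])
        · cases s with
          | nil =>
            obtain ⟨hzy, e3⟩ : y = l₁ ∧ G a₂ b' = l₂ :: p' := by simpa using e2
            refine hyT ?_
            rw [e3, vals_cons]
            exact List.mem_cons.mpr (Or.inr (by rw [hzy]; exact hl1))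
          | cons g s' =>
            obtain ⟨hgy, e3⟩ : y = g ∧ G a₂ b' = s' ++ l₁ :: l₂ :: p' := by simpa using e2
            refine inT s' e3 ?_
            have : l₂.1 ∈ vals (a₁ ++ [x]) ++ vals (g :: s') := by
              rw [← vals_append, ← e1]; exact hl2
            rcases List.mem_append.mp this with h | h
            · exact List.mem_append.mpr (Or.inl h)
            · rcases (by simpa using h : l₂.1 = g.1 ∨ l₂.1 ∈ vals s') with h | h
              · -- l₂ has value y.1, impossible inside T
                have hin : l₂.1 ∈ vals (G a₂ b') := by
                  rw [e3, vals_append]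
                  exact List.mem_append.mpr (Or.inr (by simp))
                exact absurd hin (by rw [h, ← hgy]; exact hyT)
              · exact List.mem_append.mpr (Or.inr h)
    · have h3' : ∀ u ∈ vals ra, u ∈ vals b' := by
        intro u hu
        rcases (by simpa using h3 u hu) with rfl | h
        exacts [absurd hu hc, h]
      have hyT : y.1 ∉ vals (G ra b') := by
        rw [mem_vals_G h1 h2' h3']
        exact (List.nodup_cons.mp (by simpa using h2)).1
      rw [G_not hc] at e
      cases p with
      | nil => simp at hl2
      | cons g p₀ =>
        obtain ⟨hgy, e3⟩ : y = g ∧ G ra b' = p₀ ++ l₁ :: l₂ :: p' := by simpa using e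
        rcases (by simpa using hl2 : l₂.1 = g.1 ∨ l₂.1 ∈ vals p₀) with h | h
        · have hin : l₂.1 ∈ vals (G ra b') := by
            rw [e3, vals_append]
            exact List.mem_append.mpr (Or.inr (by simp))
          exact absurd hin (by rw [h, ← hgy]; exact hyT)
        · exact ih h1 h2' h3' e3 hne hl1 h hl2n

lemma magnet_G {b ra : PW M n}
    (h1 : (vals ra).Nodup) (h2 : (vals b).Nodup) (h3 : ∀ u ∈ vals ra, u ∈ vals b) :
    IsMagnet (G ra b) := by
  intro v hstep
  rcases hstep with ⟨p, p', i, α, e, _, hv1, hv2⟩ | ⟨p, p', i₁, i₂, α₁, α₂, e, _, hne, hv1, hv2, hv3⟩ | ⟨p, p', i, α, e, _⟩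
  · -- Step1: value i occurs at least three times, contradicting count ≤ 2
    have hcount := count_vals_G_le_two h1 h2 h3 i
    rw [e, vals_append, List.count_append, vals_cons, List.count_cons] at hcount
    have c1 : 1 ≤ (vals p).count i := List.one_le_count_iff.mpr (hasVal_iff.mp hv1)
    have c2 : 1 ≤ (vals p').count i := List.one_le_count_iff.mpr (hasVal_iff.mp hv2)
    simp only [beq_iff_eq, if_true] at hcount
    omega
  · exact noStep2 h1 h2 h3 e hne (hasVal_iff.mp hv1) (hasVal_iff.mp hv2)
      (fun c => hv3 (hasVal_iff.mpr c))
  · exact noStep3 h1 h2 h3 e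

end Mag
namespace Mag
variable {M : Type*} {n : ℕ}

lemma mag_no1 {w p p' : PW M n} {z : Fin n × M} (hm : IsMagnet w) (e : w = p ++ z :: p')
    (h1 : z.1 ∈ vals p) (h2 : z.1 ∈ vals p') : False :=
  hm (p ++ p') (Or.inl ⟨p, p', z.1, z.2, by rw [e], rfl, hasVal_iff.mpr h1, hasVal_iff.mpr h2⟩)

lemma mag_no2 {w p p' : PW M n} {l₁ l₂ : Fin n × M} (hm : IsMagnet w)
    (e : w = p ++ l₁ :: l₂ :: p') (hne : l₁.1 ≠ l₂.1) (h1 : l₁.1 ∈ vals p')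
    (h2 : l₂.1 ∈ vals p) (h3 : l₂.1 ∉ vals p') : False :=
  hm (p ++ l₂ :: l₁ :: p') (Or.inr (Or.inl ⟨p, p', l₁.1, l₂.1, l₁.2, l₂.2, by rw [e], rfl,
    hne, hasVal_iff.mpr h1, hasVal_iff.mpr h2, fun c => h3 (hasVal_iff.mp c)⟩))

lemma mag_no3 {w p p' : PW M n} {z : Fin n × M} (hm : IsMagnet w)
    (e : w = p ++ z :: z :: p') : False :=
  hm (p ++ z :: p') (Or.inr (Or.inr ⟨p, p', z.1, z.2, by rw [e], rfl⟩))

lemma magnet_eq_G : ∀ (N : ℕ) (q out : PW M n), q.length ≤ N → IsMagnet (out ++ q) →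
    q = G (fo (vals out) q) (lo q) := by
  intro N
  induction N with
  | zero =>
    intro q out hlen _
    have : q = [] := List.length_eq_zero_iff.mp (Nat.le_zero.mp hlen)
    subst this
    simp
  | succ N ihN =>
    intro q out hlen hm
    by_cases hq0 : q = []
    · subst hq0; simp
    · obtain ⟨c, R, hsnd, hcR⟩ := spl_snd hq0
      obtain ⟨A, hA⟩ : ∃ A, A = (spl q).1 := ⟨_, rfl⟩
      have hq : q = A ++ c :: R := by rw [hA, ← hsnd]; exact spl_eq q
      have hP4 : ∀ (t₁ : PW M n) z (t₂ : PW M n), A = t₁ ++ z :: t₂ →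
          z.1 ∈ vals (t₂ ++ (c :: R)) := by
        intro t₁ z t₂ e
        have := spl_fst_later q t₁ z t₂ (by rw [← hA]; exact e)
        rwa [hsnd] at this
      have hD1 : ∀ (t₁ : PW M n) z (t₂ : PW M n), A = t₁ ++ z :: t₂ →
          z.1 ∉ vals (out ++ t₁) := by
        intro t₁ z t₂ e hmem
        refine mag_no1 hm (p := out ++ t₁) (p' := t₂ ++ (c :: R))
          (by rw [hq, e]; simp) hmem ?_
        exact hP4 t₁ z t₂ e
      have hAfresh : ∀ u ∈ vals A, u ∉ vals out := by
        intro u hu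
        rcases mem_vals_split hu with ⟨t₁, z, t₂, e, rfl⟩
        intro c
        exact hD1 t₁ z t₂ e (by rw [vals_append]; exact List.mem_append.mpr (Or.inl c))
      have hAnodup : (vals A).Nodup := by
        refine nodup_of_later (fun t₁ z t₂ e hc => ?_)
        exact hD1 t₁ z t₂ e (by rw [vals_append]; exact List.mem_append.mpr (Or.inr hc))
      have hloq : lo q = c :: lo R := by
        rw [hq]
        rw [lo_append_skip A (c :: R) (fun t₁ z t₂ e => by
          have := hP4 t₁ z t₂ e
          rwa [vals_append] at this)]
        exact lo_cons_of_not_mem hcR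
      have hfoA : fo (vals out) A = A := fo_eq_self hAnodup hAfresh
      have hra : fo (vals out) q = A ++ fo (vals A ++ vals out) (c :: R) := by
        rw [hq, fo_append, hfoA]
      have hlenR : R.length ≤ N := by
        have : q.length = A.length + (R.length + 1) := by rw [hq]; simp
        omega
      by_cases hcS : c.1 ∈ vals out
      · -- the first last-occurrence is a closer of a value opened before `q`
        have hcA : c.1 ∉ vals A := fun hh => hAfresh c.1 hh hcS
        have hAnil : A = [] := by
          rcases List.eq_nil_or_concat A with h | ⟨A', z₂, h⟩
          · exact h
          · exfalso
            rw [List.concat_eq_append] at h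
            subst h
            have hz₂R : z₂.1 ∈ vals R := by
              have := hP4 A' z₂ [] rfl
              rcases (by simpa using this) with h | h
              · exact absurd (by rw [h]; exact hcS) (hAfresh z₂.1 (by simp))
              · exact h
            refine mag_no2 hm (p := out ++ A') (p' := R)
              (l₁ := z₂) (l₂ := c) (by rw [hq]; simp) ?_ hz₂R ?_ hcR
            · intro cc
              exact hAfresh z₂.1 (by simp) (cc ▸ hcS)
            · rw [vals_append]
              exact List.mem_append.mpr (Or.inl hcS)
        subst hAnil
        simp only [List.nil_append] at hq hra
        have hraeq : fo (vals out) q = fo (vals out) R := by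
          rw [hra, fo]
          rw [if_pos (by simpa using hcS)]
          exact fo_congr _ _ _ (fun u _ => by simp)
        have hcra : c.1 ∉ vals (fo (vals out) R) :=
          fun cc => hcR (mem_vals_fo.mp cc).1
        have ihR := ihN R (out ++ [c]) hlenR (by
          have : (out ++ [c]) ++ R = out ++ q := by rw [hq]; simp
          rwa [this])
        have hfoR : fo (vals (out ++ [c])) R = fo (vals out) R := by
          refine fo_congr _ _ _ (fun u hu => ?_)
          rw [vals_append]
          simp only [List.mem_append, vals_cons, vals_nil, List.mem_cons]
          constructor
          · rintro (h | (h | h))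
            exacts [h, h ▸ hcS, absurd h List.not_mem_nil]
          · exact fun h => Or.inl h
        rw [hloq, hraeq, G_not hcra, ← hfoR, ← ihR, ← hq]
      · by_cases hcA : c.1 ∈ vals A
        · -- doubled value: opener inside A
          rcases mem_vals_split hcA with ⟨A₁, z, A₂, hAe, hz⟩
          have hA₂ : A₂ = [] := by
            rcases List.eq_nil_or_concat A₂ with h | ⟨A₂', z₂, h⟩
            · exact h
            · exfalso
              rw [List.concat_eq_append] at h
              subst h
              have hz₂ne : z₂.1 ≠ c.1 := by
                have hnd := hAnodup
                rw [hAe, vals_append, vals_cons] at hnd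
                have := (List.nodup_cons.mp (List.nodup_middle.mp hnd)).1
                intro cc
                refine this ?_
                rw [hz, ← cc]
                exact List.mem_append.mpr (Or.inr (by simp))
              have hz₂R : z₂.1 ∈ vals R := by
                have := hP4 (A₁ ++ z :: A₂') z₂ [] (by rw [hAe]; simp)
                rcases (by simpa using this) with h | h
                · exact absurd h hz₂ne
                · exact h
              refine mag_no2 hm (p := out ++ A₁ ++ z :: A₂') (p' := R)
                (l₁ := z₂) (l₂ := c) (by rw [hq, hAe]; simp) hz₂ne hz₂R ?_ hcR
              have hcz : c.1 ∈ vals (z :: A₂') := by rw [vals_cons, ← hz]; simp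
              rw [vals_append]
              exact List.mem_append.mpr (Or.inr hcz)
          subst hA₂
          have hzc : z ≠ c := by
            intro cc
            subst cc
            exact mag_no3 hm (p := out ++ A₁) (p' := R) (z := z)
              (by rw [hq, hAe]; simp)
          have hzA₁ : c.1 ∉ vals A₁ := by
            have hnd := hAnodup
            rw [hAe, vals_append, vals_cons] at hnd
            have := (List.nodup_cons.mp (List.nodup_middle.mp hnd)).1
            intro cc
            exact this (List.mem_append.mpr (Or.inl (hz ▸ cc)))
          have hraeq : fo (vals out) q = A₁ ++ z :: fo (vals A ++ vals out) R := by
            rw [hra, fo]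
            rw [if_pos (List.mem_append.mpr (Or.inl hcA))]
            rw [hAe]
            simp
          have ihR := ihN R (out ++ A ++ [c]) hlenR (by
            have : (out ++ A ++ [c]) ++ R = out ++ q := by rw [hq]; simp
            rwa [this])
          have hfoR : fo (vals (out ++ A ++ [c])) R = fo (vals A ++ vals out) R := by
            refine fo_congr _ _ _ (fun u hu => ?_)
            simp only [vals_append, List.mem_append, vals_cons, vals_nil, List.mem_cons]
            constructor
            · rintro ((h | h) | (h | h))
              exacts [Or.inr h, Or.inl h, Or.inl (h ▸ hcA), absurd h List.not_mem_nil]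
            · rintro (h | h)
              exacts [Or.inl (Or.inr h), Or.inl (Or.inl h)]
          rw [hloq, hraeq, G_double hzA₁ hz hzc, ← hfoR, ← ihR, hq, hAe]
          simp
        · -- single letter
          have hraeq : fo (vals out) q = A ++ c :: fo (c.1 :: (vals A ++ vals out)) R := by
            rw [hra, fo]
            rw [if_neg (by
              intro cc
              rcases List.mem_append.mp cc with h | h
              exacts [hcA h, hcS h])]
          have ihR := ihN R (out ++ A ++ [c]) hlenR (by
            have : (out ++ A ++ [c]) ++ R = out ++ q := by rw [hq]; simp
            rwa [this])
          have hfoR : fo (vals (out ++ A ++ [c])) R = fo (c.1 :: (vals A ++ vals out)) R := by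
            refine fo_congr _ _ _ (fun u hu => ?_)
            simp only [vals_append, List.mem_append, vals_cons, vals_nil, List.mem_cons]
            constructor
            · rintro ((h | h) | (h | h))
              exacts [Or.inr (Or.inr h), Or.inr (Or.inl h), Or.inl h,
                absurd h List.not_mem_nil]
            · rintro (h | (h | h))
              exacts [Or.inr (Or.inl h), Or.inl (Or.inr h), Or.inl (Or.inl h)]
          rw [hloq, hraeq, G_single hcA, ← hfoR, ← ihR, ← hq]

end Mag

/-- Every equivalence class of the relation `p ≡ p'` iff `firstK 1 p = firstK 1 p'` and
`firstKR 1 p = firstKR 1 p'` contains exactly one magnet. -/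
theorem magnet_unique_in_class (M : Type*) [Monoid M] (n : ℕ) (p : PW M n) :
    ∃! q : PW M n,
      (firstK 1 q = firstK 1 p ∧ firstKR 1 q = firstKR 1 p) ∧ IsMagnet q := by
  classical
  set a := Mag.fo [] p with ha
  set b := Mag.lo p with hb
  have hna : (Mag.vals a).Nodup := Mag.nodup_vals_fo [] p
  have hnb : (Mag.vals b).Nodup := Mag.nodup_vals_lo p
  have hab : ∀ u ∈ Mag.vals a, u ∈ Mag.vals b := by
    intro u hu
    exact Mag.mem_vals_lo.mpr (Mag.mem_vals_fo.mp hu).1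
  have hba : ∀ u ∈ Mag.vals b, u ∈ ([] : List (Fin n)) ∨ u ∈ Mag.vals a := by
    intro u hu
    exact Or.inr (Mag.mem_vals_fo.mpr ⟨Mag.mem_vals_lo.mp hu, List.not_mem_nil⟩)
  refine ⟨Mag.G a b, ⟨⟨?_, ?_⟩, ?_⟩, ?_⟩
  · rw [Mag.firstK_one, Mag.firstK_one, ← ha]
    exact Mag.fo_G hna hnb hab (fun u hu => absurd hu List.not_mem_nil) hba
  · rw [Mag.firstKR_one, Mag.firstKR_one, ← hb]
    exact Mag.lo_G hna hnb hab
  · exact Mag.magnet_G hna hnb hab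
  · rintro q' ⟨⟨h1, h2⟩, hmq⟩
    have hq' : q' = Mag.G (Mag.fo (Mag.vals ([] : PW M n)) q') (Mag.lo q') :=
      Mag.magnet_eq_G q'.length q' [] le_rfl (by simpa using hmq)
    have e1 : Mag.fo ([] : List (Fin n)) q' = a := by
      rw [ha, ← Mag.firstK_one, ← Mag.firstK_one]
      exact h1
    have e2 : Mag.lo q' = b := by
      rw [hb, ← Mag.firstKR_one, ← Mag.firstKR_one]
      exact h2
    rw [hq']
    have : Mag.vals ([] : PW M n) = ([] : List (Fin n)) := rfl
    rw [this, e1, e2]
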